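/- With A(t) = r(t)cos t, B(t) = r(t)sin t, a = 1 - κ₁A, b = κ₂A - κ₃B, the flatness conditions A'B'' - B'A'' = 0 and a b_t - b a_t = 0 together imply the pair of equations: 2(r')² - r r'' + r² = 0 and κ₁κ₃ r² + (r'κ₂ - rκ₃)cos t - (r'κ₃ + rκ₂)sin t = 0 (at each point (s,t) with r(t) ≠ 0). -/

import Mathlib

open Real

/-- With `A = r cos`, `B = r sin`, `a = 1 - κ₁A`, `b = κ₂A - κ₃B`, the
flatness conditions `A'B'' - B'A'' = 0` and `a b_t - b a_t = 0` imply the system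
`2(r')² - r r'' + r² = 0` and `κ₁κ₃r² + (r'κ₂ - rκ₃)cos t - (r'κ₃ + rκ₂)sin t = 0`. -/
theorem polar_flatness_system
    (κ₁ κ₂ κ₃ : ℝ → ℝ)
    (r : ℝ → ℝ) (hr : ContDiff ℝ 2 r)
    (A B : ℝ → ℝ)
    (hA : ∀ t, A t = r t * cos t) (hB : ∀ t, B t = r t * sin t)
    (a b : ℝ → ℝ → ℝ)
    (ha : ∀ s t, a s t = 1 - κ₁ s * A t)
    (hb : ∀ s t, b s t = κ₂ s * A t - κ₃ s * B t)
    (hflat₁ : ∀ t, deriv A t * deriv (deriv B) t - deriv B t * deriv (deriv A) t = 0)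
    (hflat₂ : ∀ s t,
      a s t * deriv (fun τ => b s τ) t - b s t * deriv (fun τ => a s τ) t = 0) :
    ∀ s t, r t ≠ 0 →
      2 * (deriv r t) ^ 2 - r t * deriv (deriv r) t + (r t) ^ 2 = 0 ∧
      κ₁ s * κ₃ s * (r t) ^ 2 + (deriv r t * κ₂ s - r t * κ₃ s) * cos t -
        (deriv r t * κ₃ s + r t * κ₂ s) * sin t = 0 := by
  have hAeq : A = fun t => r t * cos t := funext hA
  have hBeq : B = fun t => r t * sin t := funext hB
  have hr1 : Differentiable ℝ r := hr.differentiable (by norm_num)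
  have hr2 : Differentiable ℝ (deriv r) := by
    have := (contDiff_succ_iff_deriv.mp (show ContDiff ℝ (1+1) r by exact_mod_cast hr)).2
    exact this.2.differentiable (by norm_num)
  have hA' : deriv A = fun t => deriv r t * cos t - r t * sin t := by
    funext t
    rw [hAeq, deriv_fun_mul (hr1 t) (Real.differentiable_cos t), Real.deriv_cos]
    ring
  have hB' : deriv B = fun t => deriv r t * sin t + r t * cos t := by
    funext t
    rw [hBeq, deriv_fun_mul (hr1 t) (Real.differentiable_sin t), Real.deriv_sin]
  have hA'' : ∀ t, deriv (deriv A) t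
      = deriv (deriv r) t * cos t - 2 * deriv r t * sin t - r t * cos t := by
    intro t
    rw [hA']
    rw [deriv_fun_sub (f := fun y => deriv r y * cos y) (g := fun y => r y * sin y)
        ((hr2 t).mul (Real.differentiable_cos t))
        ((hr1 t).mul (Real.differentiable_sin t)),
      deriv_fun_mul (hr2 t) (Real.differentiable_cos t),
      deriv_fun_mul (hr1 t) (Real.differentiable_sin t), Real.deriv_cos, Real.deriv_sin]
    ring
  have hB'' : ∀ t, deriv (deriv B) t
      = deriv (deriv r) t * sin t + 2 * deriv r t * cos t - r t * sin t := by
    intro t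
    rw [hB']
    rw [deriv_fun_add (f := fun y => deriv r y * sin y) (g := fun y => r y * cos y)
        ((hr2 t).mul (Real.differentiable_sin t))
        ((hr1 t).mul (Real.differentiable_cos t)),
      deriv_fun_mul (hr2 t) (Real.differentiable_sin t),
      deriv_fun_mul (hr1 t) (Real.differentiable_cos t), Real.deriv_cos, Real.deriv_sin]
    ring
  have hAd : Differentiable ℝ A := by rw [hAeq]; exact hr1.mul Real.differentiable_cos
  have hBd : Differentiable ℝ B := by rw [hBeq]; exact hr1.mul Real.differentiable_sin
  intro s t hrt
  constructor
  · have key := hflat₁ t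
    rw [hA'', hB''] at key
    simp only [hA', hB'] at key
    have hsc := Real.sin_sq_add_cos_sq t
    nlinarith [key, hsc, sq_nonneg (Real.sin t), sq_nonneg (Real.cos t)]
  · have key := hflat₂ s t
    have haeq : (fun τ => a s τ) = fun τ => 1 - κ₁ s * A τ := funext (ha s)
    have hbeq : (fun τ => b s τ) = fun τ => κ₂ s * A τ - κ₃ s * B τ := funext (hb s)
    have da : deriv (fun τ => a s τ) t = -(κ₁ s * deriv A t) := by
      rw [haeq]
      rw [deriv_const_sub, deriv_const_mul _ (hAd t)]
    have db : deriv (fun τ => b s τ) t = κ₂ s * deriv A t - κ₃ s * deriv B t := by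
      rw [hbeq]
      rw [deriv_fun_sub ((hAd t).const_mul _) ((hBd t).const_mul _),
        deriv_const_mul _ (hAd t), deriv_const_mul _ (hBd t)]
    rw [da, db, ha, hb, hA, hB] at key
    simp only [hA', hB'] at key
    have hsc := Real.sin_sq_add_cos_sq t
    linear_combination key - (κ₁ s * κ₃ s * r t ^ 2) * hsc
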